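/- Let X be a finite pointed metric space and D = ((x_i,y_i))_{i∈I} ⊆ X² with x_i ≠ y_i, such that (X, D) is a connected graph. The following are equivalent: (i) (X, D) contains no cycle; (ii) the Lipschitz interpolating operator T : Lip_0(X) → ℓ_∞(I) associated to D is surjective; (iii) D admits a finite Beurling set of functions in Lip_0(X). Moreover, when (i) holds, T is a bijection. -/

import Mathlib

open SimpleGraph

noncomputable def sumw {X : Type*} {G : SimpleGraph X} (w : X → X → ℝ) {a b : X}
    (p : G.Walk a b) : ℝ := (p.darts.map fun d => w d.toProd.1 d.toProd.2).sum

@[simp] lemma sumw_nil {X : Type*} {G : SimpleGraph X} (w : X → X → ℝ) {a : X} :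
    sumw w (SimpleGraph.Walk.nil : G.Walk a a) = 0 := rfl

@[simp] lemma sumw_cons {X : Type*} {G : SimpleGraph X} (w : X → X → ℝ) {a b c : X}
    (h : G.Adj a b) (p : G.Walk b c) : sumw w (SimpleGraph.Walk.cons h p) = w a b + sumw w p := by
  simp [sumw]

@[simp] lemma sumw_append {X : Type*} {G : SimpleGraph X} (w : X → X → ℝ) {a b c : X}
    (p : G.Walk a b) (q : G.Walk b c) : sumw w (p.append q) = sumw w p + sumw w q := by
  simp [sumw]

lemma const_on_walk {X : Type*} {G : SimpleGraph X} (h : X → ℝ) (e : Sym2 X)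
    (hadj : ∀ a b, G.Adj a b → s(a, b) ≠ e → h a = h b) {u v : X} (p : G.Walk u v)
    (he : e ∉ p.edges) : h u = h v := by
  induction p with
  | nil => rfl
  | cons ha p ih =>
    rw [SimpleGraph.Walk.edges_cons, List.mem_cons] at he
    push_neg at he
    exact (hadj _ _ ha he.1.symm).trans (ih he.2)

lemma const_on_walk' {X : Type*} {G : SimpleGraph X} (h : X → ℝ)
    (hadj : ∀ a b, G.Adj a b → h a = h b) {u v : X} (p : G.Walk u v) : h u = h v := by
  induction p with
  | nil => rfl
  | cons ha p ih => exact (hadj _ _ ha).trans ih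

lemma exists_pot {X : Type*} [MetricSpace X] {I : Type*}
    (z : X) (x y : I → X) (hxy : ∀ i, x i ≠ y i)
    (hinj : ∀ i j, (x i = x j ∧ y i = y j) ∨ (x i = y j ∧ y i = x j) → i = j)
    (G : SimpleGraph X)
    (hG : ∀ a b : X, G.Adj a b ↔ ∃ i, (x i = a ∧ y i = b) ∨ (x i = b ∧ y i = a))
    (hconn : G.Connected) (hac : G.IsAcyclic) (α : I → ℝ) :
    ∃ f : X → ℝ, f z = 0 ∧ ∀ i, f (x i) - f (y i) = α i * dist (x i) (y i) := by
  classical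
  have htree : G.IsTree := ⟨hconn, hac⟩
  set w : X → X → ℝ := fun a b =>
    if h : ∃ i, x i = a ∧ y i = b then α h.choose * dist a b
    else if h : ∃ i, x i = b ∧ y i = a then -(α h.choose * dist a b) else 0 with hw
  have hw1 : ∀ i, w (x i) (y i) = α i * dist (x i) (y i) := by
    intro i
    have h : ∃ j, x j = x i ∧ y j = y i := ⟨i, rfl, rfl⟩
    have : h.choose = i := hinj _ _ (Or.inl h.choose_spec)
    simp only [hw, dif_pos h, this]
  have hnot : ∀ i, ¬ ∃ j, x j = y i ∧ y j = x i := by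
    rintro i ⟨j, hj1, hj2⟩
    exact hxy i (hinj j i (Or.inr ⟨hj1, hj2⟩) ▸ hj1)
  have hw2 : ∀ i, w (y i) (x i) = -(α i * dist (x i) (y i)) := by
    intro i
    have h : ∃ j, x j = x i ∧ y j = y i := ⟨i, rfl, rfl⟩
    have hc : h.choose = i := hinj _ _ (Or.inl h.choose_spec)
    simp only [hw, dif_neg (hnot i), dif_pos h, hc, dist_comm (y i) (x i)]
  have hwsym : ∀ a b, G.Adj a b → w a b = - w b a := by
    intro a b hab
    obtain ⟨i, ⟨h1, h2⟩ | ⟨h1, h2⟩⟩ := (hG a b).1 hab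
    · subst h1; subst h2; rw [hw1, hw2, neg_neg]
    · subst h1; subst h2; rw [hw1, hw2]
  set P : ∀ v : X, G.Walk v z := fun v => (htree.existsUnique_path v z).choose with hP
  have hPpath : ∀ v, (P v).IsPath := fun v => (htree.existsUnique_path v z).choose_spec.1
  have hPuniq : ∀ v (q : G.Walk v z), q.IsPath → q = P v :=
    fun v q hq => (htree.existsUnique_path v z).choose_spec.2 q hq
  set f : X → ℝ := fun v => sumw w (P v) with hf
  have hz : f z = 0 := by
    have : (SimpleGraph.Walk.nil : G.Walk z z) = P z :=
      hPuniq z _ SimpleGraph.Walk.IsPath.nil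
    simp [hf, ← this]
  have hstep : ∀ a b, G.Adj a b → f a = w a b + f b := by
    intro a b hab
    by_cases hb : b ∈ (P a).support
    · have htake : ((P a).takeUntil b hb).IsPath := (hPpath a).takeUntil hb
      have hdrop : ((P a).dropUntil b hb).IsPath := (hPpath a).dropUntil hb
      have hsing : ((P a).takeUntil b hb) = SimpleGraph.Walk.cons hab SimpleGraph.Walk.nil := by
        have := hac.path_unique ⟨(P a).takeUntil b hb, htake⟩ (SimpleGraph.Path.singleton hab)
        exact congrArg Subtype.val this
      have hPb : (P a).dropUntil b hb = P b := hPuniq b _ hdrop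
      have hspec := ((P a).take_spec hb).symm
      calc f a = sumw w (P a) := rfl
        _ = sumw w (((P a).takeUntil b hb).append ((P a).dropUntil b hb)) := by rw [← hspec]
        _ = w a b + f b := by rw [sumw_append, hsing, hPb]; simp; rfl
    · have hcons : (SimpleGraph.Walk.cons hab.symm (P a)).IsPath :=
        (hPpath a).cons hb
      have hPb : SimpleGraph.Walk.cons hab.symm (P a) = P b := hPuniq b _ hcons
      have : f b = w b a + f a := by rw [hf]; simp [← hPb]
      rw [this, hwsym a b hab]; ring
  refine ⟨f, hz, fun i => ?_⟩
  have hadj : G.Adj (x i) (y i) := (hG _ _).2 ⟨i, Or.inl ⟨rfl, rfl⟩⟩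
  rw [hstep _ _ hadj, hw1]; ring

lemma acyclic_of_surj {X : Type*} [MetricSpace X] {I : Type*} [DecidableEq I]
    (z : X) (x y : I → X) (hxy : ∀ i, x i ≠ y i)
    (G : SimpleGraph X)
    (hG : ∀ a b : X, G.Adj a b ↔ ∃ i, (x i = a ∧ y i = b) ∨ (x i = b ∧ y i = a))
    (hsurj : ∀ α : I → ℝ, ∃ f : X → ℝ, f z = 0 ∧
      ∀ i, (f (x i) - f (y i)) / dist (x i) (y i) = α i) : G.IsAcyclic := by
  classical
  intro v c hc
  have hne : c.edges ≠ [] := by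
    have h3 := hc.three_le_length
    intro h
    rw [← SimpleGraph.Walk.length_edges, h] at h3
    simp at h3
  obtain ⟨e, he⟩ := List.exists_mem_of_ne_nil _ hne
  induction e using Sym2.ind with
  | _ a b =>
  have hadj : G.Adj a b := c.adj_of_mem_edges he
  have hreach : (G \ fromEdgeSet {s(a, b)}).Reachable a b :=
    (SimpleGraph.adj_and_reachable_delete_edges_iff_exists_cycle.mpr ⟨v, c, hc, he⟩).2
  obtain ⟨p, hp⟩ := SimpleGraph.reachable_delete_edges_iff_exists_walk.mp hreach
  obtain ⟨i₀, hi⟩ := (hG a b).1 hadj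
  obtain ⟨f, hf0, hfα⟩ := hsurj (fun j => if j = i₀ then 1 else 0)
  have hd : ∀ j, dist (x j) (y j) ≠ 0 := fun j => by
    simpa using hxy j
  have hconst : ∀ u u', G.Adj u u' → s(u, u') ≠ s(a, b) → f u = f u' := by
    intro u u' huu hne'
    obtain ⟨j, hj⟩ := (hG u u').1 huu
    have hj0 : j ≠ i₀ := by
      rintro rfl
      apply hne'
      have h1 : s(u, u') = s(x j, y j) := by
        rcases hj with ⟨h3, h4⟩ | ⟨h3, h4⟩ <;> subst h3 <;> subst h4 <;>
          first | rfl | exact Sym2.eq_swap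
      have h2 : s(a, b) = s(x j, y j) := by
        rcases hi with ⟨h3, h4⟩ | ⟨h3, h4⟩ <;> subst h3 <;> subst h4 <;>
          first | rfl | exact Sym2.eq_swap
      rw [h1, h2]
    have hv := hfα j
    rw [if_neg hj0, div_eq_iff (hd j), zero_mul, sub_eq_zero] at hv
    rcases hj with ⟨h3, h4⟩ | ⟨h3, h4⟩ <;> subst h3 <;> subst h4
    · exact hv
    · exact hv.symm
  have hfeq : f a = f b := const_on_walk f s(a, b) hconst p hp
  have hv := hfα i₀
  rw [if_pos rfl, div_eq_iff (hd i₀), one_mul] at hv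
  rcases hi with ⟨h3, h4⟩ | ⟨h3, h4⟩ <;> subst h3 <;> subst h4
  · rw [hfeq, sub_self] at hv
    exact hd i₀ hv.symm
  · rw [hfeq.symm, sub_self] at hv
    exact hd i₀ hv.symm

/-- Let `X` be a finite pointed metric space (base point `z`) and
`D = ((x i, y i))_{i∈I}` a family of edges (`x i ≠ y i`, no repeated edges) such that
the associated graph `G` on `X` is connected. TFAE: (i) `G` contains no cycle;
(ii) the interpolating operator `T : Lip₀(X) → ℓ_∞(I)` is surjective (here `Lip₀(X)`
is just the functions vanishing at `z`, every function on a finite metric space being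
Lipschitz); (iii) `D` admits a finite Beurling set of functions in `Lip₀(X)`.
Moreover, when (i) holds, `T` is a bijection. -/
theorem stmt15 {X : Type*} [MetricSpace X] [Fintype X] {I : Type*} [Fintype I]
    [DecidableEq I] (z : X) (x y : I → X) (hxy : ∀ i, x i ≠ y i)
    (hinj : ∀ i j, (x i = x j ∧ y i = y j) ∨ (x i = y j ∧ y i = x j) → i = j)
    (G : SimpleGraph X)
    (hG : ∀ a b : X, G.Adj a b ↔ ∃ i, (x i = a ∧ y i = b) ∨ (x i = b ∧ y i = a))
    (hconn : G.Connected) :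
    (G.IsAcyclic ↔ ∀ α : I → ℝ, ∃ f : X → ℝ, f z = 0 ∧
      ∀ i, (f (x i) - f (y i)) / dist (x i) (y i) = α i) ∧
    (G.IsAcyclic ↔ ∃ M : ℝ, ∃ f : I → X → ℝ, (∀ i, f i z = 0) ∧
      (∀ i j, (f i (x j) - f i (y j)) / dist (x j) (y j) = if i = j then 1 else 0) ∧
      ∀ a b : X, a ≠ b → ∑ i, |f i a - f i b| ≤ M * dist a b) ∧
    (G.IsAcyclic → ∀ α : I → ℝ, ∃! f : X → ℝ, f z = 0 ∧
      ∀ i, (f (x i) - f (y i)) / dist (x i) (y i) = α i) := by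
  classical
  have hd : ∀ j, dist (x j) (y j) ≠ 0 := fun j => by simpa using hxy j
  -- surjectivity from acyclicity
  have hsurj : G.IsAcyclic → ∀ α : I → ℝ, ∃ f : X → ℝ, f z = 0 ∧
      ∀ i, (f (x i) - f (y i)) / dist (x i) (y i) = α i := by
    intro hac α
    obtain ⟨f, hf0, hfα⟩ := exists_pot z x y hxy hinj G hG hconn hac α
    exact ⟨f, hf0, fun i => by rw [div_eq_iff (hd i)]; exact hfα i⟩
  -- uniqueness of solutions
  have huniq : ∀ (α : I → ℝ) (f g : X → ℝ),
      (f z = 0 ∧ ∀ i, (f (x i) - f (y i)) / dist (x i) (y i) = α i) →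
      (g z = 0 ∧ ∀ i, (g (x i) - g (y i)) / dist (x i) (y i) = α i) → f = g := by
    rintro α f g ⟨hf0, hfα⟩ ⟨hg0, hgα⟩
    have hedge : ∀ i, f (x i) - g (x i) = f (y i) - g (y i) := by
      intro i
      have h1 := (hfα i).trans (hgα i).symm
      rw [div_eq_div_iff (hd i) (hd i), mul_left_inj' (hd i)] at h1
      linarith
    have hadj : ∀ a b, G.Adj a b → (f a - g a) = (f b - g b) := by
      intro a b hab
      obtain ⟨i, ⟨h1, h2⟩ | ⟨h1, h2⟩⟩ := (hG a b).1 hab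
      · subst h1; subst h2; exact hedge i
      · subst h1; subst h2; exact (hedge i).symm
    funext v
    obtain ⟨p⟩ := hconn v z
    have := const_on_walk' (fun u => f u - g u) hadj p
    simp only [hf0, hg0, sub_zero] at this
    linarith [this]
  refine ⟨⟨fun hac => hsurj hac, fun h => acyclic_of_surj z x y hxy G hG h⟩, ⟨?_, ?_⟩, ?_⟩
  · -- acyclic → Beurling
    intro hac
    choose f hf0 hfα using fun i =>
      hsurj hac (fun j => if i = j then 1 else 0)
    refine ⟨∑ p : X × X, if h : p.1 = p.2 then 0
        else (∑ i, |f i p.1 - f i p.2|) / dist p.1 p.2, f, hf0, fun i j => hfα i j, ?_⟩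
    intro a b hab
    have hpos : (0:ℝ) < dist a b := dist_pos.mpr hab
    have hterm : (∑ i, |f i a - f i b|) / dist a b ≤
        ∑ p : X × X, if h : p.1 = p.2 then 0
          else (∑ i, |f i p.1 - f i p.2|) / dist p.1 p.2 := by
      have := Finset.single_le_sum (f := fun p : X × X => if h : p.1 = p.2 then 0
          else (∑ i, |f i p.1 - f i p.2|) / dist p.1 p.2)
        (fun p _ => by
          by_cases h : p.1 = p.2
          · simp [h]
          · simp only [dif_neg h]
            positivity)
        (Finset.mem_univ (a, b))
      simpa [dif_neg hab] using this
    calc ∑ i, |f i a - f i b| = (∑ i, |f i a - f i b|) / dist a b * dist a b := by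
          field_simp
      _ ≤ _ * dist a b := mul_le_mul_of_nonneg_right hterm dist_nonneg
  · rintro ⟨M, f, h1, h2, _⟩
    apply acyclic_of_surj z x y hxy G hG
    intro α
    refine ⟨fun v => ∑ i, α i * f i v, by simp [h1], fun j => ?_⟩
    have : (∑ i, α i * f i (x j)) - (∑ i, α i * f i (y j))
        = α j * dist (x j) (y j) := by
      rw [← Finset.sum_sub_distrib]
      have : ∀ i, α i * f i (x j) - α i * f i (y j)
          = α i * ((if i = j then 1 else 0) * dist (x j) (y j)) := by
        intro i
        have := h2 i j
        rw [div_eq_iff (hd j)] at this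
        rw [← mul_sub, this]
      rw [Finset.sum_congr rfl (fun i _ => this i)]
      simp [Finset.sum_ite_eq', mul_comm, mul_assoc]
    rw [this, mul_div_assoc, div_self (hd j), mul_one]
  · intro hac α
    obtain ⟨f, hf⟩ := hsurj hac α
    exact ⟨f, hf, fun g hg => huniq α g f hg hf⟩
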